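/- For any sorted p×q layout, the k-th smallest bottleneck value satisfies v_k ≤ ω(k) for every k ∈ {1,…,p+q−1}, where ω(k) = (k+1)(k−1)/4 + 1 if k is odd and ω(k) = k²/4 + 1 if k is even. -/

import Mathlib

/-- A `p × q` layout: a matrix whose entries are exactly the integers `1, …, p*q`. -/
def IsLayout (p q : ℕ) (A : Fin p → Fin q → ℕ) : Prop :=
  Function.Injective (fun ij : Fin p × Fin q => A ij.1 ij.2) ∧
  (Set.range fun ij : Fin p × Fin q => A ij.1 ij.2) = Set.Icc 1 (p * q)

/-- Width of a layout with respect to side lengths `l`. -/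
def layW (l : ℕ → ℕ) {p q : ℕ} (A : Fin p → Fin q → ℕ) : ℕ :=
  ∑ j : Fin q, Finset.univ.sup fun i : Fin p => l (A i j)

/-- Height of a layout with respect to side lengths `l`. -/
def layH (l : ℕ → ℕ) {p q : ℕ} (A : Fin p → Fin q → ℕ) : ℕ :=
  ∑ i : Fin p, Finset.univ.sup fun j : Fin q => l (A i j)

/-- A layout is sorted if each row and each column is strictly increasing. -/
def IsSorted {p q : ℕ} (A : Fin p → Fin q → ℕ) : Prop :=
  (∀ i, StrictMono (A i)) ∧ (∀ j, StrictMono fun i => A i j)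

/-- `ω(k) = (k+1)(k-1)/4 + 1` if `k` is odd, `k²/4 + 1` if `k` is even
(the divisions are exact). -/
def omegaFn (k : ℕ) : ℕ :=
  if k % 2 = 1 then (k + 1) * (k - 1) / 4 + 1 else k ^ 2 / 4 + 1

lemma omegaFn_eq (k : ℕ) : omegaFn k = k ^ 2 / 4 + 1 := by
  unfold omegaFn
  rcases Nat.even_or_odd k with he | ho
  · simp [Nat.even_iff.mp he]
  · obtain ⟨m, rfl⟩ := ho
    have h1 : (2 * m + 1) % 2 = 1 := by omega
    have hs : 2 * m + 1 - 1 = 2 * m := by omega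
    rw [h1, if_pos rfl, hs]
    have h2 : (2 * m + 1 + 1) * (2 * m) = 4 * (m ^ 2 + m) := by ring
    have h3 : (2 * m + 1) ^ 2 = 4 * (m ^ 2 + m) + 1 := by ring
    rw [h2, h3]
    omega

lemma four_mul_le_sq (a b : ℕ) : 4 * (a * b) ≤ (a + b) ^ 2 := by
  nlinarith [two_mul_le_add_sq a b]

lemma sorted_filter_lt_get : ∀ (L : List ℕ), L.Pairwise (· < ·) → ∀ (m : ℕ) (hm : m < L.length),
    (L.filter (fun x => decide (x < L.get ⟨m, hm⟩))).length = m
  | [], _, m, hm => by simp at hm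
  | a :: t, h, 0, hm => by
    obtain ⟨ha, ht⟩ := List.pairwise_cons.mp h
    simp only [List.get, List.filter_cons]
    have : t.filter (fun x => decide (x < a)) = [] := by
      refine List.filter_eq_nil_iff.mpr ?_
      intro x hx
      simpa using (ha x hx).le.not_gt
    simp [this]
  | a :: t, h, m + 1, hm => by
    obtain ⟨ha, ht⟩ := List.pairwise_cons.mp h
    have hm' : m < t.length := by simpa using hm
    have hget : (a :: t).get ⟨m + 1, hm⟩ = t.get ⟨m, hm'⟩ := rfl
    have hmem : t.get ⟨m, hm'⟩ ∈ t := List.get_mem t _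
    rw [hget, List.filter_cons]
    have h1 : a < t.get ⟨m, hm'⟩ := ha _ hmem
    have h2 := sorted_filter_lt_get t ht m hm'
    simp only [List.get_eq_getElem] at h1 h2 ⊢
    simp [h1, h2]

lemma sort_filter_length (s : Finset ℕ) (p : ℕ → Prop) [DecidablePred p] :
    ((s.sort (· ≤ ·)).filter (fun x => decide (p x))).length = (s.filter p).card := by
  rw [← Multiset.coe_card, ← Multiset.filter_coe, Finset.sort_eq]
  rfl

/-- For a sorted `p × q` layout, the bottleneck values (the entries of the
first row and the first column) are `p + q - 1` in number, and the `k`-th smallest of them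
is at most `ω(k)` for every `k ∈ {1, …, p+q-1}`. -/
theorem bottleneck_bound (p q : ℕ) (hp : 0 < p) (hq : 0 < q)
    (A : Fin p → Fin q → ℕ) (hA : IsLayout p q A) (hS : IsSorted A) :
    let B := (Finset.univ.image fun i : Fin p => A i ⟨0, hq⟩) ∪
      (Finset.univ.image fun j : Fin q => A ⟨0, hp⟩ j)
    let L := B.sort (· ≤ ·)
    L.length = p + q - 1 ∧
      ∀ k, 1 ≤ k → k ≤ p + q - 1 → L.getD (k - 1) 0 ≤ omegaFn k := by
  intro B L
  obtain ⟨hinj, hrange⟩ := hA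
  have hBdef : B = (Finset.univ.image fun i : Fin p => A i ⟨0, hq⟩) ∪
      (Finset.univ.image fun j : Fin q => A ⟨0, hp⟩ j) := rfl
  have hLdef : L = B.sort (· ≤ ·) := rfl
  have hcol : Function.Injective (fun i : Fin p => A i ⟨0, hq⟩) := (hS.2 ⟨0, hq⟩).injective
  have hrow : Function.Injective (fun j : Fin q => A ⟨0, hp⟩ j) := (hS.1 ⟨0, hp⟩).injective
  -- the two images intersect exactly in the corner entry
  have hinter : (Finset.univ.image fun i : Fin p => A i ⟨0, hq⟩) ∩
      (Finset.univ.image fun j : Fin q => A ⟨0, hp⟩ j) = {A ⟨0, hp⟩ ⟨0, hq⟩} := by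
    ext x
    simp only [Finset.mem_inter, Finset.mem_image, Finset.mem_univ, true_and,
      Finset.mem_singleton]
    constructor
    · rintro ⟨⟨i, hi⟩, ⟨j, hj⟩⟩
      have hij : (fun ij : Fin p × Fin q => A ij.1 ij.2) (i, ⟨0, hq⟩) =
          (fun ij : Fin p × Fin q => A ij.1 ij.2) (⟨0, hp⟩, j) := by
        simpa using hi.trans hj.symm
      have h12 := hinj hij
      rw [Prod.mk.injEq] at h12
      rw [← hi, h12.1]
    · rintro rfl
      exact ⟨⟨⟨0, hp⟩, rfl⟩, ⟨⟨0, hq⟩, rfl⟩⟩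
  have h1card : (Finset.univ.image fun i : Fin p => A i ⟨0, hq⟩).card = p := by
    rw [Finset.card_image_of_injective _ hcol, Finset.card_univ, Fintype.card_fin]
  have h2card : (Finset.univ.image fun j : Fin q => A ⟨0, hp⟩ j).card = q := by
    rw [Finset.card_image_of_injective _ hrow, Finset.card_univ, Fintype.card_fin]
  have hcard : B.card = p + q - 1 := by
    have := Finset.card_union_add_card_inter
      (Finset.univ.image fun i : Fin p => A i ⟨0, hq⟩)
      (Finset.univ.image fun j : Fin q => A ⟨0, hp⟩ j)
    rw [hinter, h1card, h2card, Finset.card_singleton, ← hBdef] at this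
    omega
  have hlen : L.length = p + q - 1 := by rw [hLdef, Finset.length_sort, hcard]
  refine ⟨hlen, ?_⟩
  intro k hk1 hk2
  have hkm : k - 1 < L.length := by omega
  have hvget : L.getD (k - 1) 0 = L.get ⟨k - 1, hkm⟩ := List.getD_eq_get (l := L) (d := 0) ⟨k - 1, hkm⟩
  set v : ℕ := L.get ⟨k - 1, hkm⟩ with hvdef
  rw [hvget]
  have hvB : v ∈ B := (Finset.mem_sort (α := ℕ) (· ≤ ·)).mp (L.get_mem _)
  -- every entry lies in `Icc 1 (p*q)`
  have himgU : Finset.univ.image (fun ij : Fin p × Fin q => A ij.1 ij.2) =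
      Finset.Icc 1 (p * q) := by
    apply Finset.coe_injective
    rw [Finset.coe_image, Finset.coe_univ, Set.image_univ, hrange, Finset.coe_Icc]
  have hmemIcc : ∀ i j, A i j ∈ Finset.Icc 1 (p * q) := by
    intro i j
    rw [← himgU]
    exact Finset.mem_image.mpr ⟨(i, j), Finset.mem_univ _, rfl⟩
  have hvIcc : 1 ≤ v ∧ v ≤ p * q := by
    rw [hBdef] at hvB
    rcases Finset.mem_union.mp hvB with h | h
    · obtain ⟨i, _, hi⟩ := Finset.mem_image.mp h
      have h2 := hmemIcc i ⟨0, hq⟩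
      rw [hi] at h2
      exact Finset.mem_Icc.mp h2
    · obtain ⟨j, _, hj⟩ := Finset.mem_image.mp h
      have h2 := hmemIcc ⟨0, hp⟩ j
      rw [hj] at h2
      exact Finset.mem_Icc.mp h2
  -- the number of bottleneck values below `v` is `k - 1`
  have hcount : (B.filter (fun x => x < v)).card = k - 1 := by
    rw [← sort_filter_length B (fun x => x < v), ← hLdef]
    exact sorted_filter_lt_get L (Finset.sortedLT_sort B).pairwise (k - 1) hkm
  set a : ℕ := (Finset.univ.filter fun i : Fin p => A i ⟨0, hq⟩ < v).card with hadef
  set b : ℕ := (Finset.univ.filter fun j : Fin q => A ⟨0, hp⟩ j < v).card with hbdef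
  have hfa : ((Finset.univ.image fun i : Fin p => A i ⟨0, hq⟩).filter (fun x => x < v)).card
      = a := by
    rw [Finset.filter_image, Finset.card_image_of_injective _ hcol]
  have hfb : ((Finset.univ.image fun j : Fin q => A ⟨0, hp⟩ j).filter (fun x => x < v)).card
      = b := by
    rw [Finset.filter_image, Finset.card_image_of_injective _ hrow]
  have hkey : (k - 1) + (if A ⟨0, hp⟩ ⟨0, hq⟩ < v then 1 else 0) = a + b := by
    have hu := Finset.card_union_add_card_inter
      ((Finset.univ.image fun i : Fin p => A i ⟨0, hq⟩).filter (fun x => x < v))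
      ((Finset.univ.image fun j : Fin q => A ⟨0, hp⟩ j).filter (fun x => x < v))
    rw [← Finset.filter_union, ← Finset.filter_inter_distrib, hinter, ← hBdef, hcount,
      Finset.filter_singleton, hfa, hfb] at hu
    by_cases h0 : A ⟨0, hp⟩ ⟨0, hq⟩ < v
    · rw [if_pos h0] at hu ⊢
      simpa using hu
    · rw [if_neg h0] at hu ⊢
      simpa using hu
  -- rectangle bound: `v - 1 ≤ a * b`
  have hrect : v - 1 ≤ a * b := by
    have hTcard : (Finset.univ.filter (fun ij : Fin p × Fin q => A ij.1 ij.2 < v)).card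
        = v - 1 := by
      have e2 : ((Finset.Icc 1 (p * q)).filter (fun x => x < v)).card
          = (Finset.univ.filter (fun ij : Fin p × Fin q => A ij.1 ij.2 < v)).card := by
        rw [← himgU, Finset.filter_image, Finset.card_image_of_injective _ hinj]
      have e3 : (Finset.Icc 1 (p * q)).filter (fun x => x < v) = Finset.Icc 1 (v - 1) := by
        ext x
        simp only [Finset.mem_filter, Finset.mem_Icc]
        omega
      rw [← e2, e3, Nat.card_Icc]
      omega
    have hsub : Finset.univ.filter (fun ij : Fin p × Fin q => A ij.1 ij.2 < v) ⊆
        (Finset.univ.filter fun i : Fin p => A i ⟨0, hq⟩ < v) ×ˢ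
        (Finset.univ.filter fun j : Fin q => A ⟨0, hp⟩ j < v) := by
      intro ij hij
      simp only [Finset.mem_filter, Finset.mem_univ, true_and] at hij
      simp only [Finset.mem_product, Finset.mem_filter, Finset.mem_univ, true_and]
      constructor
      · exact lt_of_le_of_lt ((hS.1 ij.1).monotone (by simp [Fin.le_def])) hij
      · exact lt_of_le_of_lt ((hS.2 ij.2).monotone (by simp [Fin.le_def])) hij
    have := Finset.card_le_card hsub
    rw [hTcard, Finset.card_product] at this
    exact this
  by_cases h0 : A ⟨0, hp⟩ ⟨0, hq⟩ < v
  · rw [if_pos h0] at hkey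
    have hab : a + b = k := by omega
    have h4 : 4 * (a * b) ≤ k ^ 2 := by
      calc 4 * (a * b) ≤ (a + b) ^ 2 := four_mul_le_sq a b
        _ = k ^ 2 := by rw [hab]
    have hab2 : a * b ≤ k ^ 2 / 4 := by
      have h5 : 4 * (a * b) / 4 ≤ k ^ 2 / 4 := Nat.div_le_div_right h4
      rwa [Nat.mul_div_cancel_left _ (by norm_num : 0 < 4)] at h5
    rw [omegaFn_eq]
    have hv2 : v ≤ a * b + 1 := Nat.sub_le_iff_le_add.mp hrect
    exact hv2.trans (Nat.add_le_add_right hab2 1)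
  · -- `v` is at most the corner entry, which is `1`
    have hcorner : A ⟨0, hp⟩ ⟨0, hq⟩ = 1 := by
      have h1mem : (1 : ℕ) ∈ Finset.Icc 1 (p * q) := by
        have : 1 ≤ p * q := Nat.one_le_iff_ne_zero.mpr (by positivity)
        simp [this]
      rw [← himgU] at h1mem
      obtain ⟨ij, _, hij⟩ := Finset.mem_image.mp h1mem
      have hle : A ⟨0, hp⟩ ⟨0, hq⟩ ≤ A ij.1 ij.2 :=
        le_trans ((hS.2 ⟨0, hq⟩).monotone (by simp [Fin.le_def]))
          ((hS.1 ij.1).monotone (by simp [Fin.le_def]))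
      have := (Finset.mem_Icc.mp (hmemIcc ⟨0, hp⟩ ⟨0, hq⟩)).1
      omega
    have hv1 : v ≤ 1 := by omega
    rw [omegaFn_eq]
    exact hv1.trans (Nat.le_add_left 1 _)
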